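/- Let a and s be complex numbers with s² = 9 − 8a, and let k be a natural number. Assume that (a−1) + m ≠ 0, (2a − 5/2 − s/2) + m ≠ 0 and (2a − 5/2 + s/2) + m ≠ 0 for every natural number m < k. Then ∑_{j=0}^{k} [(a)_j / ((a−1)_j · j!)] · [(a)_{k−j} / ((a−1)_{k−j} · (k−j)!)] = [(2a − 3/2 − s/2)_k · (2a − 3/2 + s/2)_k] / [(2a − 5/2 − s/2)_k · (2a − 5/2 + s/2)_k] · 2^k / k!. (This is the paper's generic counterexample: the square of ₁F₁(a; a−1; x) is a ₂F₂ whose parameters involve the radical √(9−8a) and in general cannot be factored rationally.) -/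

import Mathlib

/-- Rising factorial (Pochhammer symbol) `(z)_n` over the complex numbers. -/
noncomputable def poch (z : ℂ) (n : ℕ) : ℂ := (ascPochhammer ℂ n).eval z

lemma poch_zero (z : ℂ) : poch z 0 = 1 := by simp [poch]

lemma poch_succ (z : ℂ) (n : ℕ) : poch z (n + 1) = poch z n * (z + n) :=
  ascPochhammer_succ_eval n z

lemma poch_succ_left (z : ℂ) (n : ℕ) : poch z (n + 1) = z * poch (z + 1) n := by
  simp [poch, ascPochhammer_succ_left, Polynomial.eval_comp]

lemma poch_mul (z : ℂ) (n : ℕ) : z * poch (z + 1) n = poch z n * (z + n) := by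
  rw [← poch_succ_left, poch_succ]

lemma poch_ne_zero (z : ℂ) (n : ℕ) (h : ∀ m : ℕ, m < n → z + m ≠ 0) : poch z n ≠ 0 := by
  induction n with
  | zero => simp [poch_zero]
  | succ n ih =>
    rw [poch_succ]
    exact mul_ne_zero (ih fun m hm => h m (hm.trans (Nat.lt_succ_self n)))
      (h n (Nat.lt_succ_self n))

lemma S0 (n : ℕ) : ∑ j ∈ Finset.range (n + 1),
    ((j.factorial : ℂ) * ((n - j).factorial : ℂ))⁻¹ = 2 ^ n / (n.factorial : ℂ) := by
  have h : ∀ j ∈ Finset.range (n + 1),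
      ((j.factorial : ℂ) * ((n - j).factorial : ℂ))⁻¹ = (n.choose j : ℂ) / (n.factorial : ℂ) := by
    intro j hj
    rw [Finset.mem_range, Nat.lt_succ_iff] at hj
    have key : (n.choose j : ℂ) * (j.factorial : ℂ) * ((n - j).factorial : ℂ) = (n.factorial : ℂ) := by
      exact_mod_cast congrArg (Nat.cast : ℕ → ℂ) (Nat.choose_mul_factorial_mul_factorial hj)
    have h1 : (j.factorial : ℂ) ≠ 0 := Nat.cast_ne_zero.2 (Nat.factorial_ne_zero j)
    have h2 : ((n - j).factorial : ℂ) ≠ 0 := Nat.cast_ne_zero.2 (Nat.factorial_ne_zero _)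
    have h3 : (n.factorial : ℂ) ≠ 0 := Nat.cast_ne_zero.2 (Nat.factorial_ne_zero n)
    field_simp
    linear_combination -key
  rw [Finset.sum_congr rfl h, ← Finset.sum_div]
  congr 1
  exact_mod_cast congrArg (Nat.cast : ℕ → ℂ) (Nat.sum_range_choose n)

lemma T2 (n : ℕ) : ∑ j ∈ Finset.range (n + 3),
    (j : ℂ) * (((n + 2 - j : ℕ)) : ℂ) * ((j.factorial : ℂ) * ((n + 2 - j).factorial : ℂ))⁻¹
    = 2 ^ n / (n.factorial : ℂ) := by
  rw [Finset.sum_range_succ' _ (n + 2)]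
  simp only [Nat.cast_zero, zero_mul, mul_zero, add_zero]
  rw [Finset.sum_range_succ]
  have hz : n + 2 - (n + 1 + 1) = 0 := by omega
  rw [hz]
  simp only [Nat.cast_zero, mul_zero, zero_mul, add_zero]
  rw [show (2:ℂ)^n / n.factorial = ∑ i ∈ Finset.range (n + 1),
      ((i.factorial : ℂ) * ((n - i).factorial : ℂ))⁻¹ from (S0 n).symm]
  apply Finset.sum_congr rfl
  intro i hi
  rw [Finset.mem_range, Nat.lt_succ_iff] at hi
  have e1 : n + 2 - (i + 1) = (n - i) + 1 := by omega
  rw [e1, Nat.factorial_succ, Nat.factorial_succ]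
  have hY : (((i + 1) * i.factorial : ℕ) : ℂ) * (((n - i + 1) * (n - i).factorial : ℕ) : ℂ) ≠ 0 :=
    mul_ne_zero (Nat.cast_ne_zero.2 (Nat.mul_ne_zero (Nat.succ_ne_zero i) (Nat.factorial_ne_zero i)))
      (Nat.cast_ne_zero.2 (Nat.mul_ne_zero (Nat.succ_ne_zero _) (Nat.factorial_ne_zero _)))
  have hF : ((i.factorial : ℕ) : ℂ) * (((n - i).factorial : ℕ) : ℂ) ≠ 0 :=
    mul_ne_zero (Nat.cast_ne_zero.2 (Nat.factorial_ne_zero i))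
      (Nat.cast_ne_zero.2 (Nat.factorial_ne_zero _))
  rw [← div_eq_mul_inv, inv_eq_one_div, div_eq_div_iff hY hF]
  push_cast
  ring

lemma key_sum (b : ℂ) (k : ℕ) : ∑ j ∈ Finset.range (k + 1),
    (b + j) * (b + ((k - j : ℕ) : ℂ)) * ((j.factorial : ℂ) * ((k - j).factorial : ℂ))⁻¹
    = (4 * b ^ 2 + 4 * b * k + k ^ 2 - k) * 2 ^ k / (4 * (k.factorial : ℂ)) := by
  have step : ∀ j ∈ Finset.range (k + 1),
      (b + j) * (b + ((k - j : ℕ) : ℂ)) * ((j.factorial : ℂ) * ((k - j).factorial : ℂ))⁻¹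
      = (b ^ 2 + b * k) * ((j.factorial : ℂ) * ((k - j).factorial : ℂ))⁻¹
        + (j : ℂ) * (((k - j : ℕ)) : ℂ) * ((j.factorial : ℂ) * ((k - j).factorial : ℂ))⁻¹ := by
    intro j hj
    rw [Finset.mem_range, Nat.lt_succ_iff] at hj
    have hm : (j : ℂ) + ((k - j : ℕ) : ℂ) = (k : ℂ) := by
      rw [← Nat.cast_add]
      congr 1
      omega
    rw [← add_mul]
    congr 1
    linear_combination b * hm
  rw [Finset.sum_congr rfl step, Finset.sum_add_distrib, ← Finset.mul_sum, S0]
  match k with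
  | 0 => norm_num
  | 1 =>
    norm_num [Finset.sum_range_succ]
    ring
  | (n + 2) =>
    rw [show n + 2 + 1 = n + 3 from rfl, T2 n]
    have h3 : ((n.factorial : ℕ) : ℂ) ≠ 0 := Nat.cast_ne_zero.2 (Nat.factorial_ne_zero n)
    have h4 : (((n+2).factorial : ℕ) : ℂ) ≠ 0 := Nat.cast_ne_zero.2 (Nat.factorial_ne_zero _)
    have hf : (((n+2).factorial : ℕ) : ℂ) = ((n:ℂ) + 2) * ((n:ℂ) + 1) * (n.factorial : ℂ) := by
      rw [Nat.factorial_succ, Nat.factorial_succ]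
      push_cast
      ring
    have hA : ((n:ℂ) + 2) ≠ 0 := by
      have : ((n:ℂ) + 2) = ((n + 2 : ℕ) : ℂ) := by push_cast; ring
      rw [this]; exact Nat.cast_ne_zero.2 (by omega)
    have hB : ((n:ℂ) + 1) ≠ 0 := by
      have : ((n:ℂ) + 1) = ((n + 1 : ℕ) : ℂ) := by push_cast; ring
      rw [this]; exact Nat.cast_ne_zero.2 (by omega)
    rw [hf]
    push_cast
    rw [pow_succ, pow_succ]
    field_simp
    ring

theorem stmt_9 (a s : ℂ) (hs : s ^ 2 = 9 - 8 * a) (k : ℕ)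
    (h1 : ∀ m : ℕ, m < k → a - 1 + (m : ℂ) ≠ 0)
    (h2 : ∀ m : ℕ, m < k → 2 * a - 5 / 2 - s / 2 + (m : ℂ) ≠ 0)
    (h3 : ∀ m : ℕ, m < k → 2 * a - 5 / 2 + s / 2 + (m : ℂ) ≠ 0) :
    ∑ j ∈ Finset.range (k + 1),
      (poch a j / (poch (a - 1) j * (j.factorial : ℂ))) *
        (poch a (k - j) / (poch (a - 1) (k - j) * ((k - j).factorial : ℂ)))
      = (poch (2 * a - 3 / 2 - s / 2) k * poch (2 * a - 3 / 2 + s / 2) k) /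
          (poch (2 * a - 5 / 2 - s / 2) k * poch (2 * a - 5 / 2 + s / 2) k)
        * 2 ^ k / (k.factorial : ℂ) := by
  match k, h1, h2, h3 with
  | 0, h1, h2, h3 => simp [poch_zero]
  | (n + 1), h1, h2, h3 =>
  set k := n + 1 with hk
  have hkpos : 0 < k := Nat.succ_pos n
  have hb : a - 1 ≠ 0 := by simpa using h1 0 hkpos
  -- rewrite a single factor
  have factor : ∀ j : ℕ, j ≤ k →
      poch a j / (poch (a - 1) j * (j.factorial : ℂ)) = (a - 1 + j) / ((a - 1) * (j.factorial : ℂ)) := by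
    intro j hj
    have hpj : poch (a - 1) j ≠ 0 :=
      poch_ne_zero _ _ (fun m hm => h1 m (lt_of_lt_of_le hm hj))
    have hmul := poch_mul (a - 1) j
    rw [show a - 1 + 1 = a by ring] at hmul
    have hfj : ((j.factorial : ℕ) : ℂ) ≠ 0 := Nat.cast_ne_zero.2 (Nat.factorial_ne_zero j)
    field_simp
    linear_combination hmul
  -- rewrite LHS termwise
  have lhs_eq : ∀ j ∈ Finset.range (k + 1),
      (poch a j / (poch (a - 1) j * (j.factorial : ℂ))) *
        (poch a (k - j) / (poch (a - 1) (k - j) * ((k - j).factorial : ℂ)))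
      = ((a - 1) + j) * ((a - 1) + ((k - j : ℕ) : ℂ)) *
          ((j.factorial : ℂ) * ((k - j).factorial : ℂ))⁻¹ * ((a - 1) ^ 2)⁻¹ := by
    intro j hj
    rw [Finset.mem_range, Nat.lt_succ_iff] at hj
    rw [factor j hj, factor (k - j) (Nat.sub_le k j)]
    have hfj : ((j.factorial : ℕ) : ℂ) ≠ 0 := Nat.cast_ne_zero.2 (Nat.factorial_ne_zero j)
    have hfkj : (((k - j).factorial : ℕ) : ℂ) ≠ 0 := Nat.cast_ne_zero.2 (Nat.factorial_ne_zero _)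
    simp only [div_eq_mul_inv, pow_two, mul_inv]
    ring
  rw [Finset.sum_congr rfl lhs_eq, ← Finset.sum_mul, key_sum (a - 1) k]
  -- rewrite RHS
  set α := 2 * a - 5 / 2 - s / 2 with hα_def
  set β := 2 * a - 5 / 2 + s / 2 with hβ_def
  have hα : α ≠ 0 := by simpa using h2 0 hkpos
  have hβ : β ≠ 0 := by simpa using h3 0 hkpos
  have hpα : poch α k ≠ 0 := poch_ne_zero _ _ h2
  have hpβ : poch β k ≠ 0 := poch_ne_zero _ _ h3
  have eα : poch (2 * a - 3 / 2 - s / 2) k = poch α k * (α + k) / α := by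
    rw [show (2 * a - 3 / 2 - s / 2) = α + 1 by rw [hα_def]; ring, eq_div_iff hα]
    linear_combination poch_mul α k
  have eβ : poch (2 * a - 3 / 2 + s / 2) k = poch β k * (β + k) / β := by
    rw [show (2 * a - 3 / 2 + s / 2) = β + 1 by rw [hβ_def]; ring, eq_div_iff hβ]
    linear_combination poch_mul β k
  rw [eα, eβ]
  have hfk : ((k.factorial : ℕ) : ℂ) ≠ 0 := Nat.cast_ne_zero.2 (Nat.factorial_ne_zero k)
  field_simp
  linear_combination ((k : ℂ) * (5 / 4 - a - (k : ℂ) / 4)) * hs
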